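/- Let D ∈ GLₙ(ℤ/2ℤ) be unipotent upper-triangular and let d ∈ (ℤ/2ℤ)ⁿ. For every positive integer k set V_k = { x ∈ (ℤ/2ℤ)ⁿ : (Iₙ − Dᵏ) x = [∑_{i=0}^{k−1} Dⁱ] d }. If k = 2ʳ m with m odd, then V_k = V_{2ʳ}. -/

import Mathlib

open Matrix

/-- `V_k = {x ∈ (ℤ/2ℤ)ⁿ : (Iₙ - Dᵏ)x = [∑_{i<k} Dⁱ] d}`. -/
def VsetD {n : ℕ} (D : Matrix (Fin n) (Fin n) (ZMod 2)) (d : Fin n → ZMod 2) (k : ℕ) :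
    Set (Fin n → ZMod 2) :=
  {x | (1 - D ^ k).mulVec x = (∑ i ∈ Finset.range k, D ^ i).mulVec d}

/-- Entrywise doubling kills matrices over `ZMod 2`. -/
lemma matAddSelf {n : ℕ} (X : Matrix (Fin n) (Fin n) (ZMod 2)) : X + X = 0 := by
  ext i j
  have h : ∀ a : ZMod 2, a + a = 0 := by decide
  simp [Matrix.add_apply, h]

lemma matNegEq {n : ℕ} (X : Matrix (Fin n) (Fin n) (ZMod 2)) : -X = X :=
  neg_eq_of_add_eq_zero_left (matAddSelf X)

lemma sqOneAdd {R : Type*} [Ring R] (h2 : ∀ y : R, y + y = 0) (X : R) :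
    (1 + X) ^ 2 = 1 + X ^ 2 := by
  have h : (1 + X) ^ 2 = 1 + (X + X) + X ^ 2 := by noncomm_ring
  rw [h, h2, add_zero]

lemma frob {R : Type*} [Ring R] (h2 : ∀ y : R, y + y = 0) (X : R) (r : ℕ) :
    (1 + X) ^ (2 ^ r) = 1 + X ^ (2 ^ r) := by
  induction r with
  | zero => simp
  | succ r ih =>
    rw [pow_succ, pow_mul, ih, sqOneAdd h2, ← pow_mul, ← pow_succ]

/-- A strictly upper triangular matrix is nilpotent. -/
lemma strictNilpotent {n : ℕ} (N : Matrix (Fin n) (Fin n) (ZMod 2))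
    (h : ∀ i j : Fin n, j ≤ i → N i j = 0) : N ^ n = 0 := by
  have key : ∀ k : ℕ, ∀ i j : Fin n, (N ^ k) i j ≠ 0 → (i : ℕ) + k ≤ j := by
    intro k
    induction k with
    | zero =>
      intro i j hij
      simp only [pow_zero, Matrix.one_apply, ne_eq, ite_eq_right_iff, not_forall] at hij
      obtain ⟨h1, -⟩ := hij
      subst h1
      omega
    | succ k ih =>
      intro i j hij
      rw [pow_succ, Matrix.mul_apply] at hij
      obtain ⟨l, hl⟩ : ∃ l, (N ^ k) i l * N l j ≠ 0 := by
        by_contra hc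
        push_neg at hc
        exact hij (Finset.sum_eq_zero fun l _ => hc l)
      have h1 : (N ^ k) i l ≠ 0 := fun h0 => hl (by rw [h0, zero_mul])
      have h2 : N l j ≠ 0 := fun h0 => hl (by rw [h0, mul_zero])
      have hlj : (l : ℕ) < j := by
        by_contra hc
        exact h2 (h l j (by omega))
      have := ih i l h1
      omega
  ext i j
  by_contra hc
  have := key n i j (by simpa using hc)
  have := j.isLt
  omega

/-- Decomposition of a geometric sum over a product range. -/
lemma geomSumDecomp {R : Type*} [Ring R] (x : R) (a m : ℕ) :
    ∑ i ∈ Finset.range (a * m), x ^ i =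
      (∑ j ∈ Finset.range m, (x ^ a) ^ j) * ∑ i ∈ Finset.range a, x ^ i := by
  induction m with
  | zero => simp
  | succ m ih =>
    have h1 : a * (m + 1) = a * m + a := by ring
    rw [h1, Finset.sum_range_add, ih, Finset.sum_range_succ, add_mul]
    congr 1
    rw [Finset.mul_sum]
    refine Finset.sum_congr rfl fun i _ => ?_
    rw [← pow_mul, ← pow_add]

lemma natCastMat {n : ℕ} (m : ℕ) (hm : Odd m) :
    ((m : ℕ) : Matrix (Fin n) (Fin n) (ZMod 2)) = 1 := by
  obtain ⟨t, ht⟩ := hm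
  subst ht
  push_cast
  rw [two_mul, matAddSelf, zero_add]

/-- for a unipotent upper-triangular `D ∈ GLₙ(ℤ/2ℤ)` and `d ∈ (ℤ/2ℤ)ⁿ`,
if `k = 2ʳ m` with `m` odd then `V_k = V_{2ʳ}`. -/
theorem stmt9 (n : ℕ) (D : Matrix (Fin n) (Fin n) (ZMod 2))
    (hdiag : ∀ i : Fin n, D i i = 1) (hupper : ∀ i j : Fin n, j < i → D i j = 0)
    (d : Fin n → ZMod 2) (k r m : ℕ) (hm : Odd m) (hk : k = 2 ^ r * m) :
    VsetD D d k = VsetD D d (2 ^ r) := by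
  subst hk
  set N : Matrix (Fin n) (Fin n) (ZMod 2) := D - 1 with hN
  have hDN : D = 1 + N := by rw [hN]; abel
  -- N is strictly upper triangular
  have hNstrict : ∀ i j : Fin n, j ≤ i → N i j = 0 := by
    intro i j hij
    rcases eq_or_lt_of_le hij with h | h
    · subst h
      rw [hN]
      simp [Matrix.sub_apply, Matrix.one_apply, hdiag]
    · simp [hN, Matrix.sub_apply, Matrix.one_apply, hupper i j h, Fin.ne_of_gt h]
  have hNn : N ^ n = 0 := strictNilpotent N hNstrict
  set M : Matrix (Fin n) (Fin n) (ZMod 2) := N ^ (2 ^ r) with hM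
  have hMnil : IsNilpotent M := ⟨n, by rw [hM, ← pow_mul, mul_comm, pow_mul, hNn, zero_pow]
                                       exact pow_ne_zero r two_ne_zero⟩
  have hA : D ^ (2 ^ r) = 1 + M := by rw [hDN, frob matAddSelf, hM]
  set S : Matrix (Fin n) (Fin n) (ZMod 2) := ∑ i ∈ Finset.range (2 ^ r), D ^ i with hS
  set B : Matrix (Fin n) (Fin n) (ZMod 2) := ∑ j ∈ Finset.range m, (D ^ (2 ^ r)) ^ j with hB
  -- geometric sum decomposition
  have hsum : ∑ i ∈ Finset.range (2 ^ r * m), D ^ i = B * S := geomSumDecomp D (2 ^ r) m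
  -- 1 - D^(2^r*m) = B * M
  have hBM : (1 : Matrix (Fin n) (Fin n) (ZMod 2)) - D ^ (2 ^ r * m) = B * M := by
    have h1 : B * (D ^ (2 ^ r) - 1) = (D ^ (2 ^ r)) ^ m - 1 := geom_sum_mul _ m
    have h2 : D ^ (2 ^ r) - 1 = M := by rw [hA]; abel
    have h3 : (1 : Matrix (Fin n) (Fin n) (ZMod 2)) - D ^ (2 ^ r * m)
        = -(D ^ (2 ^ r * m) - 1) := by abel
    rw [h3, matNegEq, pow_mul, ← h1, h2]
  have hM1 : (1 : Matrix (Fin n) (Fin n) (ZMod 2)) - D ^ (2 ^ r) = M := by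
    have : (1 : Matrix (Fin n) (Fin n) (ZMod 2)) - D ^ (2 ^ r)
        = -(D ^ (2 ^ r) - 1) := by abel
    rw [this, hA, matNegEq]; abel
  -- B is a unit
  have hBunit : IsUnit B := by
    set C : Matrix (Fin n) (Fin n) (ZMod 2) :=
      ∑ j ∈ Finset.range m, ∑ i ∈ Finset.range j, (1 + M) ^ i with hC
    have hcomm : Commute M C := by
      refine Commute.sum_right _ _ _ fun j _ => Commute.sum_right _ _ _ fun i _ => ?_
      exact (((Commute.one_right M).add_right (Commute.refl M)).pow_right i)
    have hBeq : B = 1 + C * M := by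
      have hsplit : ∀ j : ℕ, (1 + M) ^ j = (∑ i ∈ Finset.range j, (1 + M) ^ i) * M + 1 := by
        intro j
        have := geom_sum_mul (1 + M) j
        rw [add_sub_cancel_left] at this
        rw [this]; abel
      calc B = ∑ j ∈ Finset.range m, (1 + M) ^ j := by rw [hB, hA]
        _ = ∑ j ∈ Finset.range m,
              ((∑ i ∈ Finset.range j, (1 + M) ^ i) * M + 1) := by
            exact Finset.sum_congr rfl fun j _ => hsplit j
        _ = (∑ j ∈ Finset.range m, (∑ i ∈ Finset.range j, (1 + M) ^ i) * M)
              + ∑ j ∈ Finset.range m, 1 := Finset.sum_add_distrib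
        _ = C * M + (m : Matrix (Fin n) (Fin n) (ZMod 2)) := by
            rw [← Finset.sum_mul, Finset.sum_const, Finset.card_range, hC, nsmul_eq_mul, mul_one]
        _ = 1 + C * M := by rw [natCastMat m hm, add_comm]
    rw [hBeq]
    exact IsNilpotent.isUnit_one_add ((hcomm.symm.isNilpotent_mul_left hMnil))
  have hBinj : Function.Injective B.mulVec := mulVec_injective_iff_isUnit.2 hBunit
  -- conclude
  ext x
  simp only [VsetD, Set.mem_setOf_eq]
  rw [hsum, hBM, hM1, ← Matrix.mulVec_mulVec, ← Matrix.mulVec_mulVec]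
  exact ⟨fun h => hBinj h, fun h => congrArg B.mulVec h⟩
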